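/- (Hayashi–Nagaoka operator inequality) Let S and T be positive semidefinite operators on a finite-dimensional Hilbert space with 0 ≤ S ≤ I. Then I - (S + T)^{-1/2} S (S + T)^{-1/2} ≤ 2(I - S) + 4T, where the inverse square root is taken on the support of S + T (generalized inverse). -/

import Mathlib

open scoped ComplexOrder

/-- The inverse square root of a Hermitian matrix taken on its support
(square root of the Moore–Penrose pseudoinverse). -/
noncomputable def invSqrtOnSupport {n : Type*} [Fintype n] [DecidableEq n]
    (B : Matrix n n ℂ) (hB : B.IsHermitian) : Matrix n n ℂ :=
  (Matrix.IsHermitian.eigenvectorUnitary hB : Matrix n n ℂ) *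
    Matrix.diagonal (fun i =>
      if 0 < hB.eigenvalues i then ((Real.sqrt (hB.eigenvalues i))⁻¹ : ℂ) else 0) *
    star (Matrix.IsHermitian.eigenvectorUnitary hB : Matrix n n ℂ)

open Matrix

namespace HNaux

variable {n : Type*} [Fintype n] [DecidableEq n]

/-- `U * diagonal a * U⋆` for a real vector `a`. -/
noncomputable def phiM (U : Matrix n n ℂ) (a : n → ℝ) : Matrix n n ℂ :=
  U * Matrix.diagonal (fun i => (a i : ℂ)) * star U

lemma phiM_mul {U : Matrix n n ℂ} (hU : star U * U = 1) (a b c : n → ℝ)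
    (h : ∀ i, a i * b i = c i) : phiM U a * phiM U b = phiM U c := by
  unfold phiM
  rw [mul_assoc, mul_assoc, ← mul_assoc (star U), ← mul_assoc (star U), hU, one_mul,
    ← mul_assoc, ← mul_assoc, mul_assoc U, diagonal_mul_diagonal]
  have : (fun i => (a i : ℂ) * (b i : ℂ)) = (fun i => (c i : ℂ)) :=
    funext fun i => by rw [← h i]; push_cast; ring
  rw [this]

lemma phiM_psd (U : Matrix n n ℂ) (a : n → ℝ) (ha : ∀ i, 0 ≤ a i) :
    (phiM U a).PosSemidef := by
  have hd : PosSemidef (Matrix.diagonal (fun i => (a i : ℂ))) :=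
    posSemidef_diagonal_iff.mpr fun i => by
      rw [Complex.zero_le_real]; exact ha i
  have := hd.mul_mul_conjTranspose_same U
  unfold phiM
  rw [star_eq_conjTranspose]
  exact this

lemma phiM_one {U : Matrix n n ℂ} (hU : U * star U = 1) :
    phiM U (fun _ => 1) = 1 := by
  unfold phiM
  simp only [Complex.ofReal_one, diagonal_one, mul_one]
  exact hU

lemma phiM_sub (U : Matrix n n ℂ) (a b : n → ℝ) :
    phiM U (a - b) = phiM U a - phiM U b := by
  unfold phiM
  simp only [Pi.sub_apply, Complex.ofReal_sub]
  rw [show (Matrix.diagonal fun i => (a i : ℂ) - (b i : ℂ))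
      = Matrix.diagonal (fun i => (a i : ℂ)) - Matrix.diagonal (fun i => (b i : ℂ)) by
    rw [diagonal_sub]]
  rw [mul_sub, sub_mul]

lemma phiM_congr (U : Matrix n n ℂ) {a b : n → ℝ} (h : ∀ i, a i = b i) :
    phiM U a = phiM U b :=
  congrArg (phiM U) (funext h)

lemma psd_eq_zero_of_add_eq_zero {A B : Matrix n n ℂ} (hA : A.PosSemidef) (hB : B.PosSemidef)
    (h : A + B = 0) : A = 0 := by
  have hv : ∀ x : n → ℂ, A *ᵥ x = 0 := by
    intro x
    rw [← hA.dotProduct_mulVec_zero_iff]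
    have h1 := hA.dotProduct_mulVec_nonneg x
    have h2 := hB.dotProduct_mulVec_nonneg x
    have h3 : star x ⬝ᵥ A *ᵥ x + star x ⬝ᵥ B *ᵥ x = 0 := by
      rw [← dotProduct_add, ← add_mulVec, h, zero_mulVec, dotProduct_zero]
    have h4 : star x ⬝ᵥ A *ᵥ x ≤ 0 := by
      calc star x ⬝ᵥ A *ᵥ x ≤ star x ⬝ᵥ A *ᵥ x + star x ⬝ᵥ B *ᵥ x := le_add_of_nonneg_right h2
      _ = 0 := h3
    exact le_antisymm h4 h1
  ext i j
  have := congrFun (hv (Pi.single j 1)) i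
  rw [mulVec_single] at this
  simpa using this

lemma posSemidef_sub_of_sq {C D : Matrix n n ℂ} (hC : C.PosSemidef) (hD : D.PosSemidef)
    (h : (D * D - C * C).PosSemidef) : (D - C).PosSemidef := by
  have hE : (D - C).IsHermitian := hD.1.sub hC.1
  apply hE.posSemidef_iff_eigenvalues_nonneg.mpr
  intro i
  by_contra hneg
  push_neg at hneg
  rw [Pi.zero_apply] at hneg
  set μ := hE.eigenvalues i with hμ
  set v := ⇑(hE.eigenvectorBasis i) with hv
  have hv0 : v ≠ 0 := fun h0 => hE.eigenvectorBasis.orthonormal.ne_zero i ((WithLp.ofLp_eq_zero 2).mp h0)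
  have hEv : (D - C) *ᵥ v = (μ : ℂ) • v := by
    have := hE.mulVec_eigenvectorBasis i
    rw [RCLike.real_smul_eq_coe_smul (K := ℂ)] at this
    exact this
  have key : star v ⬝ᵥ ((D * D - C * C) *ᵥ v)
      = (μ : ℂ) * (star v ⬝ᵥ D *ᵥ v + star v ⬝ᵥ C *ᵥ v) := by
    have hsplit : D * D - C * C = D * (D - C) + (D - C) * C := by noncomm_ring
    rw [hsplit, add_mulVec, dotProduct_add, ← mulVec_mulVec, ← mulVec_mulVec, hEv,
      mulVec_smul, dotProduct_smul]
    have h2 : star v ⬝ᵥ ((D - C) *ᵥ (C *ᵥ v)) = (μ : ℂ) * (star v ⬝ᵥ C *ᵥ v) := by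
      rw [dotProduct_mulVec]
      have : star v ᵥ* (D - C) = star ((D - C) *ᵥ v) := by
        rw [star_mulVec, hE.eq]
      rw [this, hEv, star_smul, smul_dotProduct]
      simp [smul_eq_mul]
    rw [h2, smul_eq_mul, mul_add]
  have hkey0 : 0 ≤ (μ : ℂ) * (star v ⬝ᵥ D *ᵥ v + star v ⬝ᵥ C *ᵥ v) := key ▸ h.dotProduct_mulVec_nonneg v
  have ha := hD.dotProduct_mulVec_nonneg v
  have hb := hC.dotProduct_mulVec_nonneg v
  set a := star v ⬝ᵥ D *ᵥ v
  set b := star v ⬝ᵥ C *ᵥ v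
  have hs : a + b = 0 := by
    have him : (a + b).im = 0 := by
      have := (Complex.le_def.mp (add_nonneg ha hb)).2
      simpa using this.symm
    have hre : 0 ≤ (a + b).re := (Complex.le_def.mp (add_nonneg ha hb)).1
    have hmre : 0 ≤ ((μ : ℂ) * (a + b)).re := (Complex.le_def.mp hkey0).1
    rw [Complex.mul_re] at hmre
    simp only [Complex.ofReal_re, Complex.ofReal_im, him, mul_zero, zero_mul, sub_zero] at hmre
    have : (a + b).re = 0 := le_antisymm (by nlinarith) hre
    exact Complex.ext (by simpa using this) (by simpa using him)
  have ha0 : a = 0 := by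
    have : a ≤ 0 := by calc a ≤ a + b := le_add_of_nonneg_right hb
                         _ = 0 := hs
    exact le_antisymm this ha
  have hb0 : b = 0 := by
    have : b ≤ 0 := by calc b ≤ a + b := le_add_of_nonneg_left ha
                         _ = 0 := hs
    exact le_antisymm this hb
  have hDv : D *ᵥ v = 0 := (hD.dotProduct_mulVec_zero_iff v).mp ha0
  have hCv : C *ᵥ v = 0 := (hC.dotProduct_mulVec_zero_iff v).mp hb0
  have : (μ : ℂ) • v = 0 := by rw [← hEv, sub_mulVec, hDv, hCv, sub_zero]
  rcases smul_eq_zero.mp this with h1 | h1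
  · exact absurd (Complex.ofReal_eq_zero.mp h1) (ne_of_lt hneg)
  · exact hv0 h1

end HNaux

open HNaux

/-- Hayashi–Nagaoka operator inequality: for `0 ≤ S ≤ I` and `T ⪰ 0`,
`I - (S+T)^{-1/2} S (S+T)^{-1/2} ≤ 2(I - S) + 4T`, with the inverse square root
taken on the support of `S + T`. -/
theorem hayashi_nagaoka {d : ℕ} (S T : Matrix (Fin d) (Fin d) ℂ)
    (hS : S.PosSemidef) (hS1 : ((1 : Matrix (Fin d) (Fin d) ℂ) - S).PosSemidef)
    (hT : T.PosSemidef) (hST : (S + T).IsHermitian) :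
    ((2 : ℂ) • ((1 : Matrix (Fin d) (Fin d) ℂ) - S) + (4 : ℂ) • T -
      ((1 : Matrix (Fin d) (Fin d) ℂ) -
        invSqrtOnSupport _ hST * S * invSqrtOnSupport _ hST)).PosSemidef := by
  have hP : (S + T).PosSemidef := hS.add hT
  set M : Matrix (Fin d) (Fin d) ℂ := invSqrtOnSupport (S + T) hST with hMdef
  set U : Matrix (Fin d) (Fin d) ℂ := (hST.eigenvectorUnitary : Matrix (Fin d) (Fin d) ℂ)
    with hUdef
  have hUU : U * star U = 1 := Matrix.mem_unitaryGroup_iff.mp hST.eigenvectorUnitary.2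
  have hUU' : star U * U = 1 := Matrix.mem_unitaryGroup_iff'.mp hST.eigenvectorUnitary.2
  set lam : Fin d → ℝ := hST.eigenvalues with hlamdef
  have hlam : ∀ i, 0 ≤ lam i := fun i => hP.eigenvalues_nonneg i
  set pv : Fin d → ℝ := fun i => if 0 < lam i then 1 else 0 with hpv
  set sv : Fin d → ℝ := fun i => Real.sqrt (lam i) with hsv
  set mv : Fin d → ℝ := fun i => if 0 < lam i then (Real.sqrt (lam i))⁻¹ else 0 with hmv
  set Pi' : Matrix (Fin d) (Fin d) ℂ := phiM U pv with hPidef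
  set K : Matrix (Fin d) (Fin d) ℂ := phiM U sv with hKdef
  have hM : M = phiM U mv := by
    rw [hMdef, hUdef]
    unfold invSqrtOnSupport phiM
    congr 2
    ext i
    rw [hmv, ← hlamdef]
    simp [apply_ite Complex.ofReal]
  -- spectral theorem
  have hPspec : S + T = phiM U lam := by
    rw [hUdef]
    unfold phiM
    exact hST.spectral_theorem
  -- ground relations
  have gKM : K * M = Pi' := by
    rw [hKdef, hM, hPidef]
    refine phiM_mul hUU' _ _ _ fun i => ?_
    by_cases h : 0 < lam i
    · simp [hsv, hmv, hpv, h, mul_inv_cancel₀ (ne_of_gt (Real.sqrt_pos.mpr h))]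
    · simp [hsv, hmv, hpv, h]
  have gMK : M * K = Pi' := by
    rw [hKdef, hM, hPidef]
    refine phiM_mul hUU' _ _ _ fun i => ?_
    by_cases h : 0 < lam i
    · simp [hsv, hmv, hpv, h, inv_mul_cancel₀ (ne_of_gt (Real.sqrt_pos.mpr h))]
    · simp [hsv, hmv, hpv, h]
  have gPiK : Pi' * K = K := by
    rw [hKdef, hPidef]
    refine phiM_mul hUU' _ _ _ fun i => ?_
    by_cases h : 0 < lam i
    · simp [hsv, hpv, h]
    · have h0 : lam i = 0 := le_antisymm (not_lt.mp h) (hlam i)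
      simp [hsv, hpv, h, h0]
  have gKPi : K * Pi' = K := by
    rw [hKdef, hPidef]
    refine phiM_mul hUU' _ _ _ fun i => ?_
    by_cases h : 0 < lam i
    · simp [hsv, hpv, h]
    · have h0 : lam i = 0 := le_antisymm (not_lt.mp h) (hlam i)
      simp [hsv, hpv, h, h0]
  have gPiM : Pi' * M = M := by
    rw [hM, hPidef]
    refine phiM_mul hUU' _ _ _ fun i => ?_
    by_cases h : 0 < lam i <;> simp [hmv, hpv, h]
  have gMPi : M * Pi' = M := by
    rw [hM, hPidef]
    refine phiM_mul hUU' _ _ _ fun i => ?_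
    by_cases h : 0 < lam i <;> simp [hmv, hpv, h]
  have gPiPi : Pi' * Pi' = Pi' := by
    rw [hPidef]
    refine phiM_mul hUU' _ _ _ fun i => ?_
    by_cases h : 0 < lam i <;> simp [hpv, h]
  have gKK : K * K = S + T := by
    rw [hKdef, hPspec]
    refine phiM_mul hUU' _ _ _ fun i => ?_
    simp [hsv, Real.mul_self_sqrt (hlam i)]
  -- psd facts
  have hPipsd : Pi'.PosSemidef := by
    rw [hPidef]
    exact phiM_psd U _ fun i => by by_cases h : 0 < lam i <;> simp [hpv, h]
  have hKpsd : K.PosSemidef := by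
    rw [hKdef]
    exact phiM_psd U _ fun i => by simp [hsv, Real.sqrt_nonneg]
  have hMpsd : M.PosSemidef := by
    rw [hM]
    exact phiM_psd U _ fun i => by
      by_cases h : 0 < lam i <;> simp [hmv, h, Real.sqrt_nonneg, le_of_lt]
  have hPiH : Pi'.IsHermitian := hPipsd.1
  have hKH : K.IsHermitian := hKpsd.1
  have hMH : M.IsHermitian := hMpsd.1
  -- 1 - Pi'
  have h1Pi : (1 : Matrix (Fin d) (Fin d) ℂ) - Pi' = phiM U (fun i => 1 - pv i) := by
    rw [hPidef, ← phiM_one hUU, ← phiM_sub]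
    exact phiM_congr U fun i => by simp
  have h1Pipsd : ((1 : Matrix (Fin d) (Fin d) ℂ) - Pi').PosSemidef := by
    rw [h1Pi]
    exact phiM_psd U _ fun i => by by_cases h : 0 < lam i <;> simp [hpv, h]
  have hNH : ((1 : Matrix (Fin d) (Fin d) ℂ) - Pi').IsHermitian := h1Pipsd.1
  -- support facts
  have hN : ((1 : Matrix (Fin d) (Fin d) ℂ) - Pi') * (S + T) = 0 := by
    rw [h1Pi, hPspec]
    have h0 : phiM U (fun i => (1 - pv i) * lam i) = phiM U (fun _ => 0) := by
      refine phiM_congr U fun i => ?_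
      by_cases h : 0 < lam i
      · simp [hpv, h]
      · have h0 : lam i = 0 := le_antisymm (not_lt.mp h) (hlam i)
        simp [hpv, h, h0]
    rw [phiM_mul hUU' _ _ _ (fun i => rfl), h0]
    unfold phiM
    simp
  have hNSN0 : ((1 - Pi') * S * (1 - Pi')) + ((1 - Pi') * T * (1 - Pi')) = 0 := by
    have he : ((1 - Pi') * S * (1 - Pi')) + ((1 - Pi') * T * (1 - Pi'))
        = ((1 : Matrix (Fin d) (Fin d) ℂ) - Pi') * (S + T) * (1 - Pi') := by noncomm_ring
    rw [he, hN, zero_mul]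
  have hconjS : ((1 - Pi') * S * (1 - Pi')).PosSemidef := by
    have := hS.mul_mul_conjTranspose_same (1 - Pi')
    rwa [hNH.eq] at this
  have hconjT : ((1 - Pi') * T * (1 - Pi')).PosSemidef := by
    have := hT.mul_mul_conjTranspose_same (1 - Pi')
    rwa [hNH.eq] at this
  have hNSN : (1 - Pi') * S * (1 - Pi') = 0 :=
    psd_eq_zero_of_add_eq_zero hconjS hconjT hNSN0
  obtain ⟨R, hRH, hRR⟩ : ∃ R : Matrix (Fin d) (Fin d) ℂ, R.IsHermitian ∧ R * R = S :=
    by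
      open scoped MatrixOrder in
      exact ⟨CFC.sqrt S, (IsSelfAdjoint.of_nonneg (CFC.sqrt_nonneg S)), CFC.sqrt_mul_sqrt_self S hS.nonneg⟩
  have hSN : S * (1 - Pi') = 0 := by
    have h0 : (R * (1 - Pi'))ᴴ * (R * (1 - Pi')) = 0 := by
      rw [conjTranspose_mul, hRH.eq, hNH.eq]
      calc (1 - Pi') * R * (R * (1 - Pi'))
          = (1 - Pi') * (R * R) * (1 - Pi') := by noncomm_ring
        _ = 0 := by rw [hRR, hNSN]
    have hz := conjTranspose_mul_self_eq_zero.mp h0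
    calc S * (1 - Pi') = R * (R * (1 - Pi')) := by rw [← mul_assoc, hRR]
      _ = 0 := by rw [hz, mul_zero]
  have gSPi : S * Pi' = S := by
    have := hSN
    rw [mul_sub, mul_one, sub_eq_zero] at this
    exact this.symm
  have gPiS : Pi' * S = S := by
    have := congrArg conjTranspose gSPi
    rwa [conjTranspose_mul, hPiH.eq, hS.1.eq] at this
  -- K - S is psd  (operator monotonicity of sqrt, via squares)
  have hSSS : S - S * S = R * ((1 : Matrix (Fin d) (Fin d) ℂ) - S) * R := by
    rw [← hRR]
    noncomm_ring
  have hSmSS : (S - S * S).PosSemidef := by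
    rw [hSSS]
    have := hS1.mul_mul_conjTranspose_same R
    rwa [hRH.eq] at this
  have hKKSS : (K * K - S * S).PosSemidef := by
    have he : K * K - S * S = (S - S * S) + T := by rw [gKK]; abel
    rw [he]
    exact hSmSS.add hT
  have hKSpsd : (K - S).PosSemidef := posSemidef_sub_of_sq hS hKpsd hKKSS
  -- nested rewriting rules
  have n1 : ∀ Z : Matrix (Fin d) (Fin d) ℂ, K * (M * Z) = Pi' * Z := fun Z => by
    rw [← mul_assoc, gKM]
  have n2 : ∀ Z : Matrix (Fin d) (Fin d) ℂ, M * (K * Z) = Pi' * Z := fun Z => by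
    rw [← mul_assoc, gMK]
  have n3 : ∀ Z : Matrix (Fin d) (Fin d) ℂ, Pi' * (K * Z) = K * Z := fun Z => by
    rw [← mul_assoc, gPiK]
  have n4 : ∀ Z : Matrix (Fin d) (Fin d) ℂ, K * (Pi' * Z) = K * Z := fun Z => by
    rw [← mul_assoc, gKPi]
  have n5 : ∀ Z : Matrix (Fin d) (Fin d) ℂ, Pi' * (M * Z) = M * Z := fun Z => by
    rw [← mul_assoc, gPiM]
  have n6 : ∀ Z : Matrix (Fin d) (Fin d) ℂ, M * (Pi' * Z) = M * Z := fun Z => by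
    rw [← mul_assoc, gMPi]
  have n7 : ∀ Z : Matrix (Fin d) (Fin d) ℂ, Pi' * (Pi' * Z) = Pi' * Z := fun Z => by
    rw [← mul_assoc, gPiPi]
  have n8 : ∀ Z : Matrix (Fin d) (Fin d) ℂ, S * (Pi' * Z) = S * Z := fun Z => by
    rw [← mul_assoc, gSPi]
  have n9 : ∀ Z : Matrix (Fin d) (Fin d) ℂ, Pi' * (S * Z) = S * Z := fun Z => by
    rw [← mul_assoc, gPiS]
  -- the decomposition identity
  have hT' : T = K * K - S := by rw [gKK]; abel
  have decomp : (2 : ℂ) • ((1 : Matrix (Fin d) (Fin d) ℂ) - S) + (4 : ℂ) • T -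
      ((1 : Matrix (Fin d) (Fin d) ℂ) - M * S * M)
      = ((1 : Matrix (Fin d) (Fin d) ℂ) - Pi') +
        M * ((Pi' - (K + K)) * T * (Pi' - (K + K))
          + ((Pi' - K) * S * (Pi' - K) + (Pi' - K) * S * (Pi' - K))
          + (K * (K - S) * K + K * (K - S) * K + K * (K - S) * K + K * (K - S) * K)) * M := by
    rw [hT']
    simp only [mul_add, add_mul, mul_sub, sub_mul, smul_sub, smul_add, mul_one, one_mul,
      mul_assoc, gKM, gMK, gPiK, gKPi, gPiM, gMPi, gPiPi, gSPi, gPiS,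
      n1, n2, n3, n4, n5, n6, n7, n8, n9]
    module
  rw [decomp]
  -- now everything is a sum of psd matrices
  have hB1 : ((Pi' - (K + K)) * T * (Pi' - (K + K))).PosSemidef := by
    have hH : (Pi' - (K + K)).IsHermitian := hPiH.sub (hKH.add hKH)
    have := hT.mul_mul_conjTranspose_same (Pi' - (K + K))
    rwa [hH.eq] at this
  have hB2 : ((Pi' - K) * S * (Pi' - K)).PosSemidef := by
    have hH : (Pi' - K).IsHermitian := hPiH.sub hKH
    have := hS.mul_mul_conjTranspose_same (Pi' - K)
    rwa [hH.eq] at this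
  have hB3 : (K * (K - S) * K).PosSemidef := by
    have := hKSpsd.mul_mul_conjTranspose_same K
    rwa [hKH.eq] at this
  have hW : ((Pi' - (K + K)) * T * (Pi' - (K + K))
      + ((Pi' - K) * S * (Pi' - K) + (Pi' - K) * S * (Pi' - K))
      + (K * (K - S) * K + K * (K - S) * K + K * (K - S) * K + K * (K - S) * K)).PosSemidef :=
    (hB1.add (hB2.add hB2)).add (((hB3.add hB3).add hB3).add hB3)
  have hMWM := hW.mul_mul_conjTranspose_same M
  rw [hMH.eq] at hMWM
  exact h1Pipsd.add hMWM
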